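/- Let G = (V,E) be an undirected graph on {1,...,n}. The identity labeling is a valid FIN numbering of G (the order in which vertices finish in some DFS run) if and only if there is no FIN-conflicting pair, i.e., no v ∈ V and edge {u,w} ∈ E with w < v < u < p_FIN(v), where p_FIN(v) = min{u ∈ N(v) : u > v} if this set is nonempty and p_FIN(v) = ∞ otherwise. -/

import Mathlib

open Classical

/-- `adj` is (the adjacency relation of) a simple undirected graph on vertex set `{1,…,n}`. -/
def IsGraphOn (n : ℕ) (adj : ℕ → ℕ → Prop) : Prop :=
  Symmetric adj ∧ ∀ u v, adj u v → 1 ≤ u ∧ u ≤ n ∧ 1 ≤ v ∧ v ≤ n ∧ u ≠ v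

/-- `p(v)`: the largest neighbour of `v` that is smaller than `v`, and `0` if none exists
(`sSup ∅ = 0` in `ℕ`). -/
noncomputable def par (adj : ℕ → ℕ → Prop) (v : ℕ) : ℕ :=
  sSup {u | adj u v ∧ u < v}

/-- `(v, {u,w})` is a conflicting pair: `{u,w}` is an edge and `p(v) < u < v < w`. -/
def Conflict (adj : ℕ → ℕ → Prop) (v u w : ℕ) : Prop :=
  adj u w ∧ par adj v < u ∧ u < v ∧ v < w

/-- One step of a (nondeterministic) depth-first search.  The state consists of the list of
already discovered vertices, in order of discovery and together with the recorded (possibly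
virtual) parent from which each was discovered, and of the stack of active vertices
(the white path, top first). -/
inductive DFSStep (n : ℕ) (adj : ℕ → ℕ → Prop) :
    List (ℕ × ℕ) × List ℕ → List (ℕ × ℕ) × List ℕ → Prop
  | root (v : ℕ) (order : List (ℕ × ℕ)) (hv1 : 1 ≤ v) (hv2 : v ≤ n)
      (hnd : v ∉ order.map Prod.fst) :
      DFSStep n adj (order, []) (order ++ [(v, 0)], [v])
  | descend (v t : ℕ) (order : List (ℕ × ℕ)) (stack : List ℕ)
      (hadj : adj t v) (hnd : v ∉ order.map Prod.fst) :
      DFSStep n adj (order, t :: stack) (order ++ [(v, t)], v :: t :: stack)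
  | backtrack (t : ℕ) (order : List (ℕ × ℕ)) (stack : List ℕ)
      (hall : ∀ u, adj t u → u ∈ order.map Prod.fst) :
      DFSStep n adj (order, t :: stack) (order, stack)

/-- A complete DFS run discovering the vertices in the order given by the list `order`. -/
def DFSRun (n : ℕ) (adj : ℕ → ℕ → Prop) (order : List (ℕ × ℕ)) : Prop :=
  Relation.ReflTransGen (DFSStep n adj) ([], []) (order, [])

/-- The labelling `f` is a valid DFS numbering of the graph: some DFS run discovers the
vertices in the order of increasing labels `1, 2, …, n`. -/
def ValidDFSLabel (n : ℕ) (adj : ℕ → ℕ → Prop) (f : ℕ → ℕ) : Prop :=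
  ∃ order, DFSRun n adj order ∧ (order.map Prod.fst).map f = List.range' 1 n

/-- The identity labelling on `{1,…,n}` is a valid DFS numbering of the graph. -/
def ValidDFS (n : ℕ) (adj : ℕ → ℕ → Prop) : Prop :=
  ValidDFSLabel n adj id

/-- The graph is connected (on its vertex set `{1,…,n}`). -/
def ConnOn (n : ℕ) (adj : ℕ → ℕ → Prop) : Prop :=
  ∀ u v, 1 ≤ u → u ≤ n → 1 ≤ v → v ≤ n → Relation.ReflTransGen adj u v

/-- The degree of a vertex. -/
noncomputable def degree (adj : ℕ → ℕ → Prop) (v : ℕ) : ℕ :=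
  Set.ncard {u | adj u v}

/-- The size `|E △ E'|` of the symmetric difference of the edge sets of two graphs
(given by symmetric adjacency relations). -/
noncomputable def edgeDiff (a b : ℕ → ℕ → Prop) : ℕ :=
  Set.ncard {p : ℕ × ℕ | p.1 < p.2 ∧ ¬(a p.1 p.2 ↔ b p.1 p.2)}

/-- One step of a depth-first search that also records the finishing order.  The state is
`(disc, fin, stack)`: discovered vertices in discovery order, finished vertices in
finishing order, and the stack of active vertices (top first). -/
inductive FINStep (n : ℕ) (adj : ℕ → ℕ → Prop) :
    List ℕ × List ℕ × List ℕ → List ℕ × List ℕ × List ℕ → Prop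
  | root (v : ℕ) (disc fin : List ℕ) (hv1 : 1 ≤ v) (hv2 : v ≤ n) (hnd : v ∉ disc) :
      FINStep n adj (disc, fin, []) (disc ++ [v], fin, [v])
  | descend (v t : ℕ) (disc fin : List ℕ) (stack : List ℕ)
      (hadj : adj t v) (hnd : v ∉ disc) :
      FINStep n adj (disc, fin, t :: stack) (disc ++ [v], fin, v :: t :: stack)
  | backtrack (t : ℕ) (disc fin : List ℕ) (stack : List ℕ)
      (hall : ∀ u, adj t u → u ∈ disc) :
      FINStep n adj (disc, fin, t :: stack) (disc, fin ++ [t], stack)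

/-- The identity labelling on `{1,…,n}` is a valid FIN numbering: some DFS run finishes
the vertices exactly in the order `1, 2, …, n`. -/
def ValidFIN (n : ℕ) (adj : ℕ → ℕ → Prop) : Prop :=
  ∃ disc, Relation.ReflTransGen (FINStep n adj)
    (([], [], []) : List ℕ × List ℕ × List ℕ) (disc, List.range' 1 n, [])

/-- `p_FIN(v)`: the smallest neighbour of `v` larger than `v`, with the sentinel value
`n + 1` (playing the role of `∞`) if no neighbour of `v` exceeds `v`. -/
noncomputable def parFIN (n : ℕ) (adj : ℕ → ℕ → Prop) (v : ℕ) : ℕ :=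
  if ∃ u, adj u v ∧ v < u then sInf {u | adj u v ∧ v < u} else n + 1

/-- A FIN-conflicting pair `(v, {u,w})`: `{u,w} ∈ E` and `w < v < u < p_FIN(v)`. -/
def FINConflict (n : ℕ) (adj : ℕ → ℕ → Prop) (v u w : ℕ) : Prop :=
  adj u w ∧ w < v ∧ v < u ∧ u < parFIN n adj v

section AuxFIN

variable {n : ℕ} {adj : ℕ → ℕ → Prop}

lemma lt_parFIN {v : ℕ} (h : v ≤ n) : v < parFIN n adj v := by
  by_cases hex : ∃ u, adj u v ∧ v < u
  · rw [parFIN, if_pos hex]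
    exact (Nat.sInf_mem hex).2
  · rw [parFIN, if_neg hex]; omega

lemma parFIN_le {u v : ℕ} (h : adj u v) (hvu : v < u) : parFIN n adj v ≤ u := by
  rw [parFIN, if_pos ⟨u, h, hvu⟩]
  exact Nat.sInf_le ⟨h, hvu⟩

lemma parFIN_spec {v : ℕ} (h : parFIN n adj v ≤ n) :
    adj (parFIN n adj v) v ∧ v < parFIN n adj v := by
  by_cases hex : ∃ u, adj u v ∧ v < u
  · rw [parFIN, if_pos hex]
    exact Nat.sInf_mem hex
  · rw [parFIN, if_neg hex] at h; omega

/-- The chain `v, p_FIN(v), p_FIN(p_FIN(v)), …` (while `≤ n`). -/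
noncomputable def finChain (n : ℕ) (adj : ℕ → ℕ → Prop) (v : ℕ) : List ℕ :=
  if h : v ≤ n then v :: finChain n adj (parFIN n adj v) else []
  termination_by n + 1 - v
  decreasing_by have := lt_parFIN (adj := adj) h; omega

lemma finChain_of_le {v : ℕ} (h : v ≤ n) :
    finChain n adj v = v :: finChain n adj (parFIN n adj v) := by
  rw [finChain, dif_pos h]

lemma finChain_of_gt {v : ℕ} (h : n < v) : finChain n adj v = [] := by
  rw [finChain, dif_neg (by omega)]

lemma finChain_bounds (v : ℕ) : ∀ x ∈ finChain n adj v, v ≤ x ∧ x ≤ n := by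
  by_cases h : v ≤ n
  · rw [finChain_of_le h]
    intro x hx
    rcases List.mem_cons.mp hx with hx | hx
    · omega
    · have ih := finChain_bounds (parFIN n adj v) x hx
      have := lt_parFIN (adj := adj) h
      omega
  · rw [finChain_of_gt (by omega)]; simp
  termination_by n + 1 - v
  decreasing_by have := lt_parFIN (adj := adj) h; omega

lemma finChain_chain' (v : ℕ) :
    (finChain n adj v).Chain' (fun a b => adj b a) := by
  by_cases h : v ≤ n
  · rw [finChain_of_le h]
    apply List.isChain_cons.mpr
    refine ⟨?_, finChain_chain' (parFIN n adj v)⟩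
    intro b hb
    have hb' : b ∈ finChain n adj (parFIN n adj v) := List.mem_of_mem_head? hb
    have hbd := finChain_bounds (parFIN n adj v) b hb'
    by_cases h2 : parFIN n adj v ≤ n
    · have := (finChain_of_le (adj := adj) h2) ▸ hb
      simp only [List.head?_cons, Option.mem_def, Option.some.injEq] at this
      subst this
      exact (parFIN_spec h2).1
    · rw [finChain_of_gt (by omega)] at hb'; simp at hb'
  · rw [finChain_of_gt (by omega)]; exact List.isChain_nil
  termination_by n + 1 - v
  decreasing_by have := lt_parFIN (adj := adj) h; omega

lemma finChain_sorted (v : ℕ) : (finChain n adj v).Chain' (· < ·) := by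
  by_cases h : v ≤ n
  · rw [finChain_of_le h]
    apply List.isChain_cons.mpr
    refine ⟨?_, finChain_sorted (parFIN n adj v)⟩
    intro b hb
    have hb' : b ∈ finChain n adj (parFIN n adj v) := List.mem_of_mem_head? hb
    have hbd := finChain_bounds (parFIN n adj v) b hb'
    have := lt_parFIN (adj := adj) h
    omega
  · rw [finChain_of_gt (by omega)]; exact List.isChain_nil
  termination_by n + 1 - v
  decreasing_by have := lt_parFIN (adj := adj) h; omega

lemma finChain_pairwise (v : ℕ) : (finChain n adj v).Pairwise (· < ·) :=
  List.isChain_iff_pairwise.mp (finChain_sorted v)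

lemma finChain_nodup (v : ℕ) : (finChain n adj v).Nodup :=
  (finChain_pairwise v).imp Nat.ne_of_lt

lemma finChain_suffix {x v : ℕ} (hx : x ∈ finChain n adj v) :
    finChain n adj x <:+ finChain n adj v := by
  by_cases h : v ≤ n
  · rw [finChain_of_le h] at hx ⊢
    rcases List.mem_cons.mp hx with hx | hx
    · subst hx; rw [← finChain_of_le h]
    · exact (finChain_suffix hx).trans (List.suffix_cons v _)
  · rw [finChain_of_gt (by omega)] at hx; simp at hx
  termination_by n + 1 - v
  decreasing_by have := lt_parFIN (adj := adj) h; omega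

end AuxFIN
section AuxFIN2

variable {n : ℕ} {adj : ℕ → ℕ → Prop}

lemma parFIN_mem (hG : IsGraphOn n adj) (hnc : ¬∃ v u w, FINConflict n adj v u w)
    (v : ℕ) : ∀ u, v < u → u ≤ parFIN n adj v → parFIN n adj v ≤ n →
    parFIN n adj v ∈ finChain n adj u := by
  intro u hvu hupf hpfn
  by_cases he : u = parFIN n adj v
  · subst he; rw [finChain_of_le hpfn]; exact List.mem_cons_self
  · have hu_lt : u < parFIN n adj v := lt_of_le_of_ne hupf he
    have hun : u ≤ n := by omega
    have hlt := lt_parFIN (adj := adj) hun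
    have hpfu_le : parFIN n adj u ≤ parFIN n adj v := by
      by_contra hgt
      push_neg at hgt
      exact hnc ⟨u, parFIN n adj v, v, (parFIN_spec hpfn).1, hvu, hu_lt, hgt⟩
    have hrec := parFIN_mem hG hnc v (parFIN n adj u) (by omega) hpfu_le hpfn
    rw [finChain_of_le hun]
    exact List.mem_cons_of_mem _ hrec
  termination_by u => parFIN n adj v - u
  decreasing_by omega

lemma mem_finChain_aux (hG : IsGraphOn n adj) (hnc : ¬∃ v u w, FINConflict n adj v u w)
    {u v : ℕ} (hadj : adj u v) (hvu : v < u) :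
    ∀ x, v ≤ x → x ≤ u → x ∈ finChain n adj v → u ∈ finChain n adj v := by
  intro x hvx hxu hxmem
  have hun : u ≤ n := (hG.2 u v hadj).2.1
  by_cases he : x = u
  · subst he; exact hxmem
  · have hx_lt : x < u := lt_of_le_of_ne hxu he
    have hxn : x ≤ n := by omega
    have hpfx : parFIN n adj x ≤ u := by
      by_contra hgt
      push_neg at hgt
      rcases eq_or_lt_of_le hvx with hvx' | hvx'
      · subst hvx'; have := parFIN_le (n := n) hadj hvu; omega
      · exact hnc ⟨x, u, v, hadj, hvx', hx_lt, hgt⟩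
    have hlt := lt_parFIN (adj := adj) hxn
    have hpfmem : parFIN n adj x ∈ finChain n adj v := by
      have hsuf := finChain_suffix (v := v) hxmem
      have : parFIN n adj x ∈ finChain n adj x := by
        rw [finChain_of_le hxn, finChain_of_le (show parFIN n adj x ≤ n by omega)]
        simp
      exact hsuf.subset this
    exact mem_finChain_aux hG hnc hadj hvu (parFIN n adj x) (by omega) hpfx hpfmem
  termination_by x => u - x
  decreasing_by have := lt_parFIN (adj := adj) hxn; omega

lemma mem_finChain_of_adj (hG : IsGraphOn n adj) (hnc : ¬∃ v u w, FINConflict n adj v u w)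
    {u v : ℕ} (hadj : adj u v) (hvu : v < u) : u ∈ finChain n adj v := by
  have hun : u ≤ n := (hG.2 u v hadj).2.1
  have hvn : v ≤ n := by omega
  exact mem_finChain_aux hG hnc hadj hvu v le_rfl (le_of_lt hvu)
    (by rw [finChain_of_le hvn]; simp)

end AuxFIN2
section AuxFIN3

variable {n : ℕ} {adj : ℕ → ℕ → Prop}

lemma push_run : ∀ (r s disc fin : List ℕ),
    List.Chain' (fun a b => adj b a) (r.reverse ++ s) →
    r.Nodup → (∀ x ∈ r, x ∉ disc) → (∀ x ∈ r, 1 ≤ x ∧ x ≤ n) →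
    Relation.ReflTransGen (FINStep n adj) (disc, fin, s) (disc ++ r, fin, r.reverse ++ s) := by
  intro r
  induction r with
  | nil => intro s disc fin _ _ _ _; simp; exact Relation.ReflTransGen.refl
  | cons a r' ih =>
    intro s disc fin hch hnd hnd2 hb
    have hstep : FINStep n adj (disc, fin, s) (disc ++ [a], fin, a :: s) := by
      match s with
      | [] =>
        exact FINStep.root a disc fin (hb a (by simp)).1 (hb a (by simp)).2
          (hnd2 a (by simp))
      | t :: s' =>
        have hrel : adj t a := by
          have h1 : List.Chain' (fun a b => adj b a) ((r'.reverse ++ [a]) ++ t :: s') := by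
            simpa using hch
          have h2 := (List.isChain_append.mp h1).2.2
          exact h2 a (by simp) t (by simp)
        exact FINStep.descend a t disc fin s' hrel (hnd2 a (by simp))
    have hch' : List.Chain' (fun a b => adj b a) (r'.reverse ++ (a :: s)) := by
      have : r'.reverse ++ (a :: s) = (a :: r').reverse ++ s := by simp
      rw [this]; exact hch
    have hrest := ih (a :: s) (disc ++ [a]) fin hch' (List.nodup_cons.mp hnd).2
      (by
        intro x hx
        simp only [List.mem_append, List.mem_singleton]
        push_neg
        exact ⟨hnd2 x (by simp [hx]), fun hxa => (List.nodup_cons.mp hnd).1 (hxa ▸ hx)⟩)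
      (fun x hx => hb x (by simp [hx]))
    have heq1 : disc ++ [a] ++ r' = disc ++ (a :: r') := by simp
    have heq2 : r'.reverse ++ (a :: s) = (a :: r').reverse ++ s := by simp
    rw [heq1, heq2] at hrest
    exact Relation.ReflTransGen.head hstep hrest

lemma run_to (hG : IsGraphOn n adj) (hnc : ¬∃ v u w, FINConflict n adj v u w) :
    ∀ v, v ≤ n → ∃ disc, Relation.ReflTransGen (FINStep n adj) ([], [], [])
      (disc, List.range' 1 v, finChain n adj (v + 1)) ∧
      ∀ x, x ∈ disc ↔ x ∈ List.range' 1 v ∨ x ∈ finChain n adj (v + 1) := by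
  intro v
  induction v with
  | zero =>
    intro _
    refine ⟨(finChain n adj 1).reverse, ?_, ?_⟩
    · have := push_run (adj := adj) (n := n) (finChain n adj 1).reverse [] [] []
        (by simp [finChain_chain' (v := 1)])
        (List.nodup_reverse.mpr (finChain_nodup 1))
        (by simp)
        (by
          intro x hx
          rw [List.mem_reverse] at hx
          have := finChain_bounds (adj := adj) 1 x hx
          omega)
      simpa using this
    · simp
  | succ v ih =>
    intro hv
    obtain ⟨disc, hrun, hmem⟩ := ih (by omega)
    set w := v + 1 with hw
    have hwn : w ≤ n := hv
    have hchainw : finChain n adj w = w :: finChain n adj (parFIN n adj w) :=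
      finChain_of_le hwn
    have hall : ∀ u, adj w u → u ∈ disc := by
      intro u hadj
      have hb := hG.2 w u hadj
      have hne : u ≠ w := Ne.symm hb.2.2.2.2
      rcases lt_or_gt_of_ne hne with h | h
      · rw [hmem]; left
        rw [List.mem_range'_1]
        omega
      · rw [hmem]; right
        exact mem_finChain_of_adj hG hnc (hG.1 hadj) h
    have hstep1 : FINStep n adj (disc, List.range' 1 v, w :: finChain n adj (parFIN n adj w))
        (disc, List.range' 1 v ++ [w], finChain n adj (parFIN n adj w)) :=
      FINStep.backtrack w disc (List.range' 1 v) _ hall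
    have hrange : List.range' 1 v ++ [w] = List.range' 1 (v + 1) := by
      rw [List.range'_concat]
      simp [hw]
      omega
    have hsuf : finChain n adj (parFIN n adj w) <:+ finChain n adj (w + 1) := by
      by_cases hpfn : parFIN n adj w ≤ n
      · have hlt := lt_parFIN (adj := adj) hwn
        exact finChain_suffix (parFIN_mem hG hnc w (w + 1) (by omega) (by omega) hpfn)
      · rw [finChain_of_gt (by omega)]
        exact List.nil_suffix
    obtain ⟨p, hp⟩ := hsuf
    have hnodup_w1 : (finChain n adj (w + 1)).Nodup := finChain_nodup _
    rw [← hp] at hnodup_w1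
    have hnd := List.nodup_append.mp hnodup_w1
    have hpush := push_run (adj := adj) (n := n) p.reverse
        (finChain n adj (parFIN n adj w)) disc (List.range' 1 (v + 1))
        (by rw [List.reverse_reverse, hp]; exact finChain_chain' _)
        (List.nodup_reverse.mpr hnd.1)
        (by
          intro x hx
          rw [List.mem_reverse] at hx
          have hxw1 : x ∈ finChain n adj (w + 1) := by
            rw [← hp]; exact List.mem_append_left _ hx
          have hbx := finChain_bounds (adj := adj) (w + 1) x hxw1
          rw [hmem]
          rintro (hxr | hxc)
          · rw [List.mem_range'_1] at hxr; omega
          · rw [hchainw, List.mem_cons] at hxc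
            rcases hxc with hxc | hxc
            · omega
            · exact hnd.2.2 x hx x hxc rfl)
        (by
          intro x hx
          rw [List.mem_reverse] at hx
          have hxw1 : x ∈ finChain n adj (w + 1) := by
            rw [← hp]; exact List.mem_append_left _ hx
          have hbx := finChain_bounds (adj := adj) (w + 1) x hxw1
          omega)
    rw [List.reverse_reverse, hp] at hpush
    refine ⟨disc ++ p.reverse, ?_, ?_⟩
    · have h1 : Relation.ReflTransGen (FINStep n adj) ([], [], [])
          (disc, List.range' 1 v ++ [w], finChain n adj (parFIN n adj w)) := by
        rw [hchainw] at hrun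
        exact hrun.tail hstep1
      rw [hrange] at h1
      exact h1.trans hpush
    · intro x
      simp only [List.mem_append, hmem x, List.mem_reverse, hchainw, List.mem_cons,
        ← hrange, ← hp, List.mem_singleton]
      rw [show List.range' 1 w = List.range' 1 v ++ [w] from hrange.symm, List.mem_append,
        List.mem_singleton]
      tauto

end AuxFIN3
section AuxFIN4

variable {n : ℕ} {adj : ℕ → ℕ → Prop}

/-- Forward invariant of a FIN search. -/
def FwdInv (adj : ℕ → ℕ → Prop) (s : List ℕ × List ℕ × List ℕ) : Prop :=
  s.1.Nodup ∧ s.1.Perm (s.2.1 ++ s.2.2) ∧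
    (∀ x ∈ s.2.1, ∀ u, adj x u → u ∈ s.1) ∧
    s.2.2.Chain' (fun a b => adj b a)

lemma fwdInv_step {s s' : List ℕ × List ℕ × List ℕ}
    (h : FINStep n adj s s') (hI : FwdInv adj s) : FwdInv adj s' := by
  obtain ⟨h1, h2, h3, h4⟩ := hI
  cases h with
  | root v disc fin hv1 hv2 hnd =>
    refine ⟨by simp [List.nodup_append, h1, hnd]; rintro a ha rfl; exact hnd ha, ?_, ?_,
      List.isChain_singleton v⟩
    · simpa using h2.append_right [v]
    · intro x hx u hu
      simp only [List.mem_append]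
      exact Or.inl (h3 x hx u hu)
  | descend v t disc fin stack hadj hnd =>
    refine ⟨by simp [List.nodup_append, h1, hnd]; rintro a ha rfl; exact hnd ha, ?_, ?_, ?_⟩
    · have hperm2 : (t :: stack ++ [v]).Perm (v :: t :: stack) := by
        simpa using (List.perm_append_comm (l₁ := t :: stack) (l₂ := [v]))
      exact (h2.append_right [v]).trans
        (by rw [List.append_assoc]; exact List.Perm.append_left fin hperm2)
    · intro x hx u hu
      simp only [List.mem_append]
      exact Or.inl (h3 x hx u hu)
    · exact List.isChain_cons_cons.mpr ⟨hadj, h4⟩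
  | backtrack t disc fin stack hall =>
    refine ⟨h1, ?_, ?_, (List.isChain_cons.mp h4).2⟩
    · simpa [List.append_assoc] using h2
    · intro x hx u hu
      rcases List.mem_append.mp hx with hx | hx
      · exact h3 x hx u hu
      · rw [List.mem_singleton] at hx
        subst hx
        exact hall u hu
end AuxFIN4
section AuxFIN5

variable {n : ℕ} {adj : ℕ → ℕ → Prop}

lemma fwdInv_reach {s : List ℕ × List ℕ × List ℕ}
    (h : Relation.ReflTransGen (FINStep n adj) ([], [], []) s) : FwdInv adj s := by
  induction h with
  | refl => exact ⟨by simp, by simp, by simp, List.isChain_nil⟩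
  | tail _ hstep ih => exact fwdInv_step hstep ih

/-- Backward invariant: the stack is a sublist of the future finishing order. -/
def BwdInv (n : ℕ) (s : List ℕ × List ℕ × List ℕ) : Prop :=
  ∃ rest, List.range' 1 n = s.2.1 ++ rest ∧ List.Sublist s.2.2 rest

lemma bwdInv_step {s s' : List ℕ × List ℕ × List ℕ}
    (h : FINStep n adj s s') (hI : BwdInv n s') : BwdInv n s := by
  obtain ⟨rest, hr, hsub⟩ := hI
  cases h with
  | root v disc fin hv1 hv2 hnd =>
    exact ⟨rest, hr, List.nil_sublist _⟩
  | descend v t disc fin stack hadj hnd =>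
    exact ⟨rest, hr, (List.sublist_cons_self v (t :: stack)).trans hsub⟩
  | backtrack t disc fin stack hall =>
    refine ⟨t :: rest, by simpa [List.append_assoc] using hr, hsub.cons₂ t⟩

lemma bwdInv_reach {s f : List ℕ × List ℕ × List ℕ} (hf : f.2.1 = List.range' 1 n)
    (hf2 : f.2.2 = []) (h : Relation.ReflTransGen (FINStep n adj) s f) : BwdInv n s := by
  induction h using Relation.ReflTransGen.head_induction_on with
  | refl => exact ⟨[], by simp [hf], by simp [hf2]⟩
  | head hstep _ ih => exact bwdInv_step hstep ih

lemma exists_transition {α : Type*} {R : α → α → Prop} {a b : α}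
    (h : Relation.ReflTransGen R a b) (P : α → Prop) (ha : ¬P a) (hb : P b) :
    ∃ c d, Relation.ReflTransGen R a c ∧ R c d ∧ Relation.ReflTransGen R d b ∧
      ¬P c ∧ P d := by
  induction h with
  | refl => exact absurd hb ha
  | @tail c b h1 h2 ih =>
    by_cases hc : P c
    · obtain ⟨x, y, hx1, hx2, hx3, hx4, hx5⟩ := ih hc
      exact ⟨x, y, hx1, hx2, hx3.tail h2, hx4, hx5⟩
    · exact ⟨c, b, h1, h2, Relation.ReflTransGen.refl, hc, hb⟩

end AuxFIN5
/-- The identity labelling is a valid FIN numbering of `G` (the order in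
which vertices finish in some DFS run) if and only if there is no FIN-conflicting pair. -/
theorem validFIN_iff_no_finConflict (n : ℕ) (adj : ℕ → ℕ → Prop) (hG : IsGraphOn n adj) :
    ValidFIN n adj ↔ ¬∃ v u w, FINConflict n adj v u w := by
  constructor
  · rintro ⟨disc, hrun⟩ ⟨v, u, w, hadj, hwv, hvu, hupf⟩
    have hb := hG.2 u w hadj
    have hv1 : 1 ≤ v := by omega
    have hvn : v ≤ n := by omega
    have hPb : v ∈ (disc, List.range' 1 n, ([] : List ℕ)).2.1 := by
      simp only [List.mem_range'_1]; omega
    obtain ⟨c, d, hac, hcd, hdb, hPc, hPd⟩ := exists_transition hrun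
      (fun s => v ∈ s.2.1) (by simp) hPb
    cases hcd with
    | root v' disc' fin' _ _ _ => exact hPc hPd
    | descend v' t' disc' fin' stack' _ _ => exact hPc hPd
    | backtrack t disc₀ fin₀ stack₀ hall =>
      simp only at hPc hPd
      have hvt : v = t := by
        rcases List.mem_append.mp hPd with h | h
        · exact absurd h hPc
        · simpa using h
      subst hvt
      obtain ⟨hnd, hperm, hfinadj, hch⟩ := fwdInv_reach hac
      obtain ⟨rest2, hr2, hsub2⟩ := bwdInv_reach (n := n) rfl rfl hdb
      simp only at hperm hfinadj hch hr2 hsub2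
      have hpw : (List.range' 1 n).Pairwise (· < ·) := List.pairwise_lt_range' (s := 1) (n := n)
      rw [hr2, List.append_assoc] at hpw
      have hpw2 := List.pairwise_append.mp hpw
      have hfinlt : ∀ x ∈ fin₀, x < v := fun x hx => hpw2.2.2 x hx v (by simp)
      have hpwrest : rest2.Pairwise (· < ·) ∧ ∀ x ∈ rest2, v < x := by
        have h := List.pairwise_cons.mp (by simpa using hpw2.2.1)
        exact ⟨h.2, h.1⟩
      have hwmem : w ∈ fin₀ := by
        have hwrange : w ∈ List.range' 1 n := by rw [List.mem_range'_1]; omega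
        rw [hr2] at hwrange
        rcases List.mem_append.mp hwrange with h | h
        · rcases List.mem_append.mp h with h | h
          · exact h
          · simp only [List.mem_singleton] at h; omega
        · have := hpwrest.2 w h; omega
      have humem : u ∈ disc₀ := hfinadj w hwmem u (hG.1 hadj)
      have humem2 : u ∈ fin₀ ++ v :: stack₀ := hperm.subset humem
      have hustack : u ∈ stack₀ := by
        rcases List.mem_append.mp humem2 with h | h
        · have := hfinlt u h; omega
        · rcases List.mem_cons.mp h with h | h
          · omega
          · exact h
      cases stack₀ with
      | nil => simp at hustack
      | cons t₀ s₀ =>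
        have hadjt : adj t₀ v := (List.isChain_cons_cons.mp hch).1
        have ht₀rest : t₀ ∈ rest2 := hsub2.subset (by simp)
        have hvt₀ : v < t₀ := hpwrest.2 t₀ ht₀rest
        have hpf : parFIN n adj v ≤ t₀ := parFIN_le hadjt hvt₀
        have ht₀u : t₀ ≤ u := by
          rcases List.mem_cons.mp hustack with h | h
          · omega
          · have hpwstack := List.Pairwise.sublist hsub2 hpwrest.1
            have := (List.pairwise_cons.mp hpwstack).1 u h
            omega
        omega
  · intro hnc
    obtain ⟨disc, hrun, _⟩ := run_to hG hnc n le_rfl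
    rw [finChain_of_gt (by omega)] at hrun
    exact ⟨disc, hrun⟩
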